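/- (Kővári–Sós–Turán) There is a constant C such that for every positive integers n and t ≤ n, every graph on n vertices containing no complete bipartite subgraph K_{t,t} (with two disjoint t-sets fully joined) has at most C · n^{2-1/t} edges. -/

import Mathlib

open Finset

section
variable {n t : ℕ} (G : SimpleGraph (Fin n)) [DecidableRel G.Adj]

lemma kst_step1 (v : Fin n) :
    (G.degree v).descFactorial t =
      (Finset.univ.filter (fun f : Fin t ↪ Fin n => ∀ i, G.Adj v (f i))).card := by
  have h1 : Fintype.card (Fin t ↪ G.neighborSet v) = (G.degree v).descFactorial t := by
    rw [Fintype.card_embedding_eq, Fintype.card_fin, SimpleGraph.card_neighborSet_eq_degree]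
  have e : (Fin t ↪ G.neighborSet v) ≃ {f : Fin t ↪ Fin n // ∀ i, G.Adj v (f i)} :=
    { toFun := fun g => ⟨g.trans (Function.Embedding.subtype _), fun i => (g i).2⟩
      invFun := fun f => Function.Embedding.codRestrict _ f.1 (fun i => f.2 i)
      left_inv := fun g => by ext i; rfl
      right_inv := fun f => by ext i; rfl }
  rw [← h1, Fintype.card_congr e, Fintype.card_subtype]

lemma kst_step2 (ht : 0 < t)
    (hK : ¬ ∃ S T : Finset (Fin n), Disjoint S T ∧ S.card = t ∧ T.card = t ∧
          ∀ a ∈ S, ∀ b ∈ T, G.Adj a b) (f : Fin t ↪ Fin n) :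
    (Finset.univ.filter (fun v => ∀ i, G.Adj v (f i))).card ≤ t := by
  by_contra h
  push_neg at h
  obtain ⟨S, hSsub, hScard⟩ := Finset.exists_subset_card_eq h.le
  refine hK ⟨S, Finset.univ.map f, ?_, hScard, by simp, ?_⟩
  · rw [Finset.disjoint_left]
    rintro a haS haT
    obtain ⟨i, -, rfl⟩ := Finset.mem_map.1 haT
    exact G.irrefl ((Finset.mem_filter.1 (hSsub haS)).2 i)
  · rintro a ha b hb
    obtain ⟨i, -, rfl⟩ := Finset.mem_map.1 hb
    exact (Finset.mem_filter.1 (hSsub ha)).2 i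

lemma kst_count (ht : 0 < t)
    (hK : ¬ ∃ S T : Finset (Fin n), Disjoint S T ∧ S.card = t ∧ T.card = t ∧
          ∀ a ∈ S, ∀ b ∈ T, G.Adj a b) :
    ∑ v : Fin n, (G.degree v).descFactorial t ≤ n ^ t * t := by
  calc ∑ v : Fin n, (G.degree v).descFactorial t
      = ∑ v : Fin n, (Finset.univ.filter (fun f : Fin t ↪ Fin n => ∀ i, G.Adj v (f i))).card := by
        simp_rw [kst_step1]
    _ = ∑ f : Fin t ↪ Fin n, (Finset.univ.filter (fun v => ∀ i, G.Adj v (f i))).card := by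
        simp_rw [Finset.card_filter]
        exact Finset.sum_comm
    _ ≤ ∑ _f : Fin t ↪ Fin n, t := Finset.sum_le_sum (fun f _ => kst_step2 G ht hK f)
    _ = Fintype.card (Fin t ↪ Fin n) * t := by rw [Finset.sum_const, Finset.card_univ, smul_eq_mul]
    _ ≤ n ^ t * t := by
        apply Nat.mul_le_mul_right
        rw [Fintype.card_embedding_eq, Fintype.card_fin, Fintype.card_fin]
        exact Nat.descFactorial_le_pow n t

end

lemma kst_descFac_lb (d t : ℕ) : (d - t) ^ t ≤ d.descFactorial t := by
  rw [Nat.descFactorial_eq_prod_range]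
  calc (d - t) ^ t = ∏ _i ∈ Finset.range t, (d - t) := by
        rw [Finset.prod_const, Finset.card_range]
    _ ≤ ∏ i ∈ Finset.range t, (d - i) :=
        Finset.prod_le_prod' (fun i hi => Nat.sub_le_sub_left (Finset.mem_range.1 hi).le d)

lemma kst_real_step {m n t : ℕ} (hn : 1 ≤ n) (ht : 0 < t)
    (h : m ^ t ≤ 2 ^ t * n ^ (2 * t - 1)) :
    (m : ℝ) ≤ 2 * (n : ℝ) ^ ((2 : ℝ) - 1 / (t : ℝ)) := by
  have hn0 : (0 : ℝ) < n := by exact_mod_cast hn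
  have ht0 : (t : ℝ) ≠ 0 := Nat.cast_ne_zero.2 ht.ne'
  have key : (2 * (n : ℝ) ^ ((2 : ℝ) - 1 / (t : ℝ))) ^ t = 2 ^ t * (n : ℝ) ^ (2 * t - 1) := by
    rw [mul_pow]
    congr 1
    rw [← Real.rpow_natCast ((n : ℝ) ^ ((2 : ℝ) - 1 / (t : ℝ))) t, ← Real.rpow_mul hn0.le]
    have : ((2 : ℝ) - 1 / (t : ℝ)) * t = ((2 * t - 1 : ℕ) : ℝ) := by
      have h1 : (1 : ℕ) ≤ 2 * t := by omega
      push_cast [h1]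
      field_simp
    rw [this, Real.rpow_natCast]
  rw [← pow_le_pow_iff_left₀ (Nat.cast_nonneg m) (by positivity) ht.ne', key]
  exact_mod_cast h

/-- Kővári–Sós–Turán: there is a constant C such that every K_{t,t}-free
graph on n vertices (1 ≤ t ≤ n) has at most C·n^{2-1/t} edges. -/
theorem stmt_15 :
    ∃ C : ℝ, ∀ (n t : ℕ), 0 < t → t ≤ n → ∀ G : SimpleGraph (Fin n),
      (¬ ∃ S T : Finset (Fin n), Disjoint S T ∧ S.card = t ∧ T.card = t ∧
          ∀ a ∈ S, ∀ b ∈ T, G.Adj a b) →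
      (G.edgeSet.ncard : ℝ) ≤ C * (n : ℝ) ^ ((2 : ℝ) - 1 / (t : ℝ)) := by
  refine ⟨4, fun n t ht htn G hK => ?_⟩
  classical
  have hn : 1 ≤ n := ht.trans_le htn
  -- edge count
  have hE : G.edgeSet.ncard = G.edgeFinset.card := by
    rw [Set.ncard_eq_toFinset_card', SimpleGraph.edgeFinset]
  set E := G.edgeFinset.card with hEdef
  set x := ∑ v : Fin n, (G.degree v - t) with hxdef
  -- 2E ≤ x + n * t
  have h5 : 2 * E ≤ x + n * t := by
    rw [← SimpleGraph.sum_degrees_eq_twice_card_edges]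
    calc ∑ v : Fin n, G.degree v ≤ ∑ v : Fin n, ((G.degree v - t) + t) :=
          Finset.sum_le_sum (fun v _ => le_tsub_add)
      _ = x + n * t := by
          rw [Finset.sum_add_distrib, Finset.sum_const, Finset.card_univ, Fintype.card_fin,
            smul_eq_mul]
  -- power mean
  have hpm : x ^ t ≤ n ^ (t - 1) * ∑ v : Fin n, (G.degree v - t) ^ t := by
    have := pow_sum_le_card_mul_sum_pow (s := (Finset.univ : Finset (Fin n)))
      (f := fun v => G.degree v - t) (fun i _ => Nat.zero_le _) (t - 1)
    rwa [Nat.sub_add_cancel ht, Finset.card_univ, Fintype.card_fin] at this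
  have hsum : ∑ v : Fin n, (G.degree v - t) ^ t ≤ n ^ t * t :=
    le_trans (Finset.sum_le_sum fun v _ => kst_descFac_lb (G.degree v) t) (kst_count G ht hK)
  have hx : x ^ t ≤ 2 ^ t * n ^ (2 * t - 1) := by
    calc x ^ t ≤ n ^ (t - 1) * (n ^ t * t) := le_trans hpm (Nat.mul_le_mul_left _ hsum)
      _ = t * n ^ (2 * t - 1) := by
          rw [← mul_assoc, ← pow_add]
          rw [show t - 1 + t = 2 * t - 1 by omega]
          ring
      _ ≤ 2 ^ t * n ^ (2 * t - 1) := Nat.mul_le_mul_right _ (Nat.lt_two_pow_self (n := t)).le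
  have htn' : (n * t) ^ t ≤ 2 ^ t * n ^ (2 * t - 1) := by
    calc (n * t) ^ t = n ^ t * t ^ t := mul_pow n t t
      _ = n ^ t * (t * t ^ (t - 1)) := by
          rw [← pow_succ', Nat.sub_add_cancel ht]
      _ ≤ n ^ t * (t * n ^ (t - 1)) := by
          exact Nat.mul_le_mul_left _ (Nat.mul_le_mul_left _ (Nat.pow_le_pow_left htn _))
      _ = t * n ^ (2 * t - 1) := by
          rw [show 2 * t - 1 = t + (t - 1) by omega, pow_add]; ring
      _ ≤ 2 ^ t * n ^ (2 * t - 1) := Nat.mul_le_mul_right _ (Nat.lt_two_pow_self (n := t)).le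
  have hxR := kst_real_step hn ht hx
  have htnR := kst_real_step hn ht htn'
  have h2E : (2 * E : ℝ) ≤ 4 * (n : ℝ) ^ ((2 : ℝ) - 1 / (t : ℝ)) := by
    calc (2 * E : ℝ) ≤ (x : ℝ) + (n * t : ℕ) := by exact_mod_cast h5
      _ ≤ 2 * (n : ℝ) ^ ((2 : ℝ) - 1 / (t : ℝ)) + 2 * (n : ℝ) ^ ((2 : ℝ) - 1 / (t : ℝ)) :=
          add_le_add hxR htnR
      _ = 4 * (n : ℝ) ^ ((2 : ℝ) - 1 / (t : ℝ)) := by ring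
  rw [hE]
  have : (E : ℝ) ≤ (2 * E : ℝ) := by
    have : (0:ℝ) ≤ E := Nat.cast_nonneg E
    linarith
  linarith
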